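/- Let f : I ⊆ ℝ → ℝ be differentiable on I° with f' integrable on [a,b], where a, b ∈ I° with a < b, let α, λ ∈ [0,1], and let q > 1 with 1/p + 1/q = 1. Suppose |f'|^q is a P-function on [a,b]. Define I_f(λ,α,a,b) = λ(α f(a) + (1-α) f(b)) + (1-λ) f(α a + (1-α) b) - (1/(b-a)) ∫_a^b f(x) dx, c_f(α,q) = (1-α)[|f'((1-α) b + α a)|^q + |f'(a)|^q], k_f(α,q) = α[|f'((1-α) b + α a)|^q + |f'(b)|^q], ε₁(α,λ,p) = (αλ)^{p+1} + (1-α-αλ)^{p+1}, and ε₂(α,λ,p) = (αλ)^{p+1} - (αλ-1+α)^{p+1}. Then |I_f(λ,α,a,b)| ≤ (b-a)(1/(p+1))^{1/p} · D, where D = ε₁^{1/p}(α,λ,p) c_f^{1/q}(α,q) + ε₁^{1/p}(1-α,λ,p) k_f^{1/q}(α,q) if αλ ≤ 1-α ≤ 1-λ(1-α); D = ε₁^{1/p}(α,λ,p) c_f^{1/q}(α,q) + ε₂^{1/p}(1-α,λ,p) k_f^{1/q}(α,q) if αλ ≤ 1-λ(1-α) ≤ 1-α; and D = ε₂^{1/p}(α,λ,p)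 c_f^{1/q}(α,q) + ε₁^{1/p}(1-α,λ,p) k_f^{1/q}(α,q) if 1-α ≤ αλ ≤ 1-λ(1-α). -/

import Mathlib

open MeasureTheory Set Real

/-- `g` is a `P`-function on the set `s`: it is nonnegative on `s` and
`g (t*x + (1-t)*y) ≤ g x + g y` for all `x, y ∈ s` and `t ∈ [0,1]`. -/
def IsPFunctionOn (g : ℝ → ℝ) (s : Set ℝ) : Prop :=
  (∀ x ∈ s, 0 ≤ g x) ∧
    ∀ x ∈ s, ∀ y ∈ s, ∀ t ∈ Set.Icc (0:ℝ) 1, g (t * x + (1 - t) * y) ≤ g x + g y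

/-- `ε₁(α,λ,p) = (αλ)^{p+1} + (1-α-αλ)^{p+1}`. -/
noncomputable def eps1 (α lam p : ℝ) : ℝ :=
  (α * lam) ^ (p + 1) + (1 - α - α * lam) ^ (p + 1)

/-- `ε₂(α,λ,p) = (αλ)^{p+1} - (αλ-1+α)^{p+1}`. -/
noncomputable def eps2 (α lam p : ℝ) : ℝ :=
  (α * lam) ^ (p + 1) - (α * lam - 1 + α) ^ (p + 1)

lemma ker_right (s u v p : ℝ) (hp : 0 < p) (hsu : s ≤ u) (huv : u ≤ v) :
    ∫ t in u..v, |t - s| ^ p = ((v - s) ^ (p+1) - (u - s) ^ (p+1)) / (p+1) := by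
  have h1 : ∫ t in u..v, |t - s| ^ p = ∫ t in u..v, (t - s) ^ p := by
    apply intervalIntegral.integral_congr
    intro t ht
    rw [Set.uIcc_of_le huv] at ht
    dsimp only
    rw [abs_of_nonneg (by linarith [ht.1])]
  have h2 : ∫ t in u..v, (t - s) ^ p = ∫ x in u - s..v - s, (fun x : ℝ => x ^ p) x :=
    intervalIntegral.integral_comp_sub_right (fun x : ℝ => x ^ p) s
  rw [h1, h2, integral_rpow (Or.inl (by linarith))]

lemma ker_left (s u v p : ℝ) (hp : 0 < p) (hvs : v ≤ s) (huv : u ≤ v) :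
    ∫ t in u..v, |t - s| ^ p = ((s - u) ^ (p+1) - (s - v) ^ (p+1)) / (p+1) := by
  have h1 : ∫ t in u..v, |t - s| ^ p = ∫ t in u..v, (s - t) ^ p := by
    apply intervalIntegral.integral_congr
    intro t ht
    rw [Set.uIcc_of_le huv] at ht
    dsimp only
    rw [abs_of_nonpos (by linarith [ht.2]), neg_sub]
  have h2 : ∫ t in u..v, (s - t) ^ p = ∫ x in s - v..s - u, (fun x : ℝ => x ^ p) x :=
    intervalIntegral.integral_comp_sub_left (fun x : ℝ => x ^ p) s
  rw [h1, h2, integral_rpow (Or.inl (by linarith))]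

lemma ker_mid (s u v p : ℝ) (hp : 0 < p) (hus : u ≤ s) (hsv : s ≤ v) :
    ∫ t in u..v, |t - s| ^ p = ((s - u) ^ (p+1) + (v - s) ^ (p+1)) / (p+1) := by
  have hcont : Continuous (fun t : ℝ => |t - s| ^ p) := by
    apply Continuous.rpow_const (by continuity)
    intro x; right; linarith
  have hsplit : (∫ t in u..s, |t - s| ^ p) + (∫ t in s..v, |t - s| ^ p)
      = ∫ t in u..v, |t - s| ^ p :=
    intervalIntegral.integral_add_adjacent_intervals
      (hcont.intervalIntegrable _ _) (hcont.intervalIntegrable _ _)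
  rw [← hsplit, ker_left s u s p hp le_rfl hus, ker_right s s v p hp le_rfl hsv,
    sub_self, Real.zero_rpow (ne_of_gt (by linarith))]
  ring

lemma holder_interval {u v : ℝ} (huv : u ≤ v) {φ ψ : ℝ → ℝ} {p q : ℝ}
    (hpq : Real.HolderConjugate p q)
    (hφ : MemLp φ (ENNReal.ofReal p) (volume.restrict (Ioc u v)))
    (hψ : MemLp ψ (ENNReal.ofReal q) (volume.restrict (Ioc u v))) :
    |∫ t in u..v, φ t * ψ t| ≤
      (∫ t in u..v, |φ t| ^ p) ^ (1/p) * (∫ t in u..v, |ψ t| ^ q) ^ (1/q) := by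
  rw [intervalIntegral.integral_of_le huv, intervalIntegral.integral_of_le huv,
    intervalIntegral.integral_of_le huv]
  calc |∫ t in Ioc u v, φ t * ψ t| ≤ ∫ t in Ioc u v, ‖φ t * ψ t‖ := by
        rw [← Real.norm_eq_abs]; exact norm_integral_le_integral_norm _
    _ = ∫ t in Ioc u v, ‖φ t‖ * ‖ψ t‖ := by simp [norm_mul]
    _ ≤ (∫ t in Ioc u v, ‖φ t‖ ^ p) ^ (1/p) * (∫ t in Ioc u v, ‖ψ t‖ ^ q) ^ (1/q) :=
        integral_mul_norm_le_Lp_mul_Lq hpq hφ hψ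
    _ = (∫ t in Ioc u v, |φ t| ^ p) ^ (1/p) * (∫ t in Ioc u v, |ψ t| ^ q) ^ (1/q) := by
        simp [Real.norm_eq_abs]

set_option maxHeartbeats 1000000 in
theorem stmt_7 (I : Set ℝ) (hI : Convex ℝ I) (f f' : ℝ → ℝ)
    (a b : ℝ) (ha : a ∈ interior I) (hb : b ∈ interior I) (hab : a < b)
    (hdf : ∀ x ∈ interior I, HasDerivAt f (f' x) x)
    (hint : IntervalIntegrable f' MeasureTheory.volume a b)
    (α lam : ℝ) (hα : α ∈ Set.Icc (0:ℝ) 1) (hlam : lam ∈ Set.Icc (0:ℝ) 1)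
    (p q : ℝ) (hp : 1 < p) (hq : 1 < q) (hpq : 1 / p + 1 / q = 1)
    (hP : IsPFunctionOn (fun x => |f' x| ^ q) (Set.Icc a b)) :
    (α * lam ≤ 1 - α ∧ 1 - α ≤ 1 - lam * (1 - α) →
      |lam * (α * f a + (1 - α) * f b) + (1 - lam) * f (α * a + (1 - α) * b)
          - (1 / (b - a)) * ∫ x in a..b, f x|
        ≤ (b - a) * (1 / (p + 1)) ^ (1 / p)
            * ((eps1 α lam p) ^ (1 / p)
                * ((1 - α) * (|f' ((1 - α) * b + α * a)| ^ q + |f' a| ^ q)) ^ (1 / q)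
              + (eps1 (1 - α) lam p) ^ (1 / p)
                * (α * (|f' ((1 - α) * b + α * a)| ^ q + |f' b| ^ q)) ^ (1 / q))) ∧
    (α * lam ≤ 1 - lam * (1 - α) ∧ 1 - lam * (1 - α) ≤ 1 - α →
      |lam * (α * f a + (1 - α) * f b) + (1 - lam) * f (α * a + (1 - α) * b)
          - (1 / (b - a)) * ∫ x in a..b, f x|
        ≤ (b - a) * (1 / (p + 1)) ^ (1 / p)
            * ((eps1 α lam p) ^ (1 / p)
                * ((1 - α) * (|f' ((1 - α) * b + α * a)| ^ q + |f' a| ^ q)) ^ (1 / q)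
              + (eps2 (1 - α) lam p) ^ (1 / p)
                * (α * (|f' ((1 - α) * b + α * a)| ^ q + |f' b| ^ q)) ^ (1 / q))) ∧
    (1 - α ≤ α * lam ∧ α * lam ≤ 1 - lam * (1 - α) →
      |lam * (α * f a + (1 - α) * f b) + (1 - lam) * f (α * a + (1 - α) * b)
          - (1 / (b - a)) * ∫ x in a..b, f x|
        ≤ (b - a) * (1 / (p + 1)) ^ (1 / p)
            * ((eps2 α lam p) ^ (1 / p)
                * ((1 - α) * (|f' ((1 - α) * b + α * a)| ^ q + |f' a| ^ q)) ^ (1 / q)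
              + (eps1 (1 - α) lam p) ^ (1 / p)
                * (α * (|f' ((1 - α) * b + α * a)| ^ q + |f' b| ^ q)) ^ (1 / q))) := by
  have hba : (0:ℝ) < b - a := sub_pos.mpr hab
  have hp0 : (0:ℝ) < p := by linarith
  have hq0 : (0:ℝ) < q := by linarith
  have hpq' : Real.HolderConjugate p q := Real.holderConjugate_iff.mpr ⟨hp, by simpa [one_div] using hpq⟩
  have hc0 : (0:ℝ) ≤ 1 - α := by linarith [hα.2]
  have hc1 : (1:ℝ) - α ≤ 1 := by linarith [hα.1]
  have hs₁0 : 0 ≤ α * lam := mul_nonneg hα.1 hlam.1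
  have hs₂1 : 1 - lam * (1 - α) ≤ 1 := by nlinarith [hlam.1, hα.2]
  have hIcc : Icc a b ⊆ interior I := by
    rw [← segment_eq_Icc hab.le]
    exact (hI.interior).segment_subset ha hb
  have haff_mem : ∀ t ∈ Icc (0:ℝ) 1, a + t * (b - a) ∈ Icc a b := by
    intro t ht
    constructor <;> nlinarith [ht.1, ht.2]
  have hAmem : (1 - α) * b + α * a ∈ Icc a b := by
    constructor <;> nlinarith [hα.1, hα.2]
  -- boundedness of |f'|^q on [a,b]
  have hbdq : ∀ x ∈ Icc a b, |f' x| ^ q ≤ |f' a| ^ q + |f' b| ^ q := by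
    intro x hx
    have hr : (b - x) / (b - a) ∈ Icc (0:ℝ) 1 := by
      constructor
      · exact div_nonneg (by linarith [hx.2]) hba.le
      · rw [div_le_one hba]; linarith [hx.1]
    have := hP.2 a ⟨le_rfl, hab.le⟩ b ⟨hab.le, le_rfl⟩ _ hr
    have hxeq : (b - x) / (b - a) * a + (1 - (b - x) / (b - a)) * b = x := by
      field_simp; ring
    rwa [hxeq] at this
  have hM : ∀ x ∈ Icc a b, |f' x| ≤ (|f' a| ^ q + |f' b| ^ q) ^ (1/q) := by
    intro x hx
    have h0 : |f' x| = (|f' x| ^ q) ^ (1/q) := by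
      rw [one_div, Real.rpow_rpow_inv (abs_nonneg _) (by linarith)]
    rw [h0]
    exact Real.rpow_le_rpow (Real.rpow_nonneg (abs_nonneg _) _) (hbdq x hx) (by positivity)
  -- measurability of f' ∘ affine on subintervals of [0,1]
  have hg_meas : ∀ u v : ℝ, 0 ≤ u → v ≤ 1 →
      AEStronglyMeasurable (fun t => f' (a + t * (b - a)))
        (volume.restrict (Ioc u v)) := by
    intro u v hu hv
    have hm : Measurable (fun t : ℝ => deriv f (a + t * (b - a))) :=
      (measurable_deriv f).comp (by measurability)
    refine hm.aestronglyMeasurable.congr ?_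
    refine (ae_restrict_iff' measurableSet_Ioc).mpr (ae_of_all _ fun t ht => ?_)
    have : a + t * (b - a) ∈ interior I :=
      hIcc (haff_mem t ⟨by linarith [ht.1], by linarith [ht.2]⟩)
    exact (hdf _ this).deriv
  have hg_bd : ∀ u v : ℝ, 0 ≤ u → v ≤ 1 →
      ∀ᵐ t ∂(volume.restrict (Ioc u v)),
        ‖f' (a + t * (b - a))‖ ≤ (|f' a| ^ q + |f' b| ^ q) ^ (1/q) := by
    intro u v hu hv
    refine (ae_restrict_iff' measurableSet_Ioc).mpr (ae_of_all _ fun t ht => ?_)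
    rw [Real.norm_eq_abs]
    exact hM _ (haff_mem t ⟨by linarith [ht.1], by linarith [ht.2]⟩)
  have hg_mem : ∀ u v : ℝ, 0 ≤ u → v ≤ 1 →
      MemLp (fun t => f' (a + t * (b - a))) (ENNReal.ofReal q)
        (volume.restrict (Ioc u v)) := fun u v hu hv =>
    MemLp.of_bound (hg_meas u v hu hv) _ (hg_bd u v hu hv)
  have hgi : ∀ u v : ℝ, 0 ≤ u → v ≤ 1 → u ≤ v →
      IntervalIntegrable (fun t => f' (a + t * (b - a))) volume u v := by
    intro u v hu hv huv
    rw [intervalIntegrable_iff_integrableOn_Ioc_of_le huv]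
    exact Integrable.mono' (integrableOn_const measure_Ioc_lt_top.ne)
      (hg_meas u v hu hv) (hg_bd u v hu hv)
  have hgq_meas : ∀ u v : ℝ, 0 ≤ u → v ≤ 1 →
      AEStronglyMeasurable (fun t => |f' (a + t * (b - a))| ^ q)
        (volume.restrict (Ioc u v)) := by
    intro u v hu hv
    have := (((hg_meas u v hu hv).norm).aemeasurable.pow
      (aemeasurable_const (b := q))).aestronglyMeasurable
    simpa [Real.norm_eq_abs] using this
  have hgq_int : ∀ u v : ℝ, 0 ≤ u → v ≤ 1 → u ≤ v →
      IntervalIntegrable (fun t => |f' (a + t * (b - a))| ^ q) volume u v := by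
    intro u v hu hv huv
    rw [intervalIntegrable_iff_integrableOn_Ioc_of_le huv]
    refine Integrable.mono'
      (integrableOn_const (C := |f' a| ^ q + |f' b| ^ q) measure_Ioc_lt_top.ne)
      (hgq_meas u v hu hv) ?_
    refine (ae_restrict_iff' measurableSet_Ioc).mpr (ae_of_all _ fun t ht => ?_)
    rw [Real.norm_of_nonneg (Real.rpow_nonneg (abs_nonneg _) _)]
    exact hbdq _ (haff_mem t ⟨by linarith [ht.1], by linarith [ht.2]⟩)
  -- integrability of f ∘ affine
  have hfc : ∀ u v : ℝ, 0 ≤ u → v ≤ 1 → u ≤ v →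
      IntervalIntegrable (fun t => f (a + t * (b - a))) volume u v := by
    intro u v hu hv huv
    apply ContinuousOn.intervalIntegrable
    intro t ht
    rw [uIcc_of_le huv] at ht
    have hc1' : ContinuousAt (fun t : ℝ => a + t * (b - a)) t := by fun_prop
    have hc2' : ContinuousAt f (a + t * (b - a)) :=
      (hdf _ (hIcc (haff_mem t ⟨by linarith [ht.1], by linarith [ht.2]⟩))).continuousAt
    have hc3 := ContinuousAt.comp (f := fun t : ℝ => a + t * (b - a)) (x := t) hc2' hc1'
    rw [uIcc_of_le huv]
    exact hc3.continuousWithinAt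
  -- the key integration-by-parts identity
  have key : ∀ s u v : ℝ, u ∈ Icc (0:ℝ) 1 → v ∈ Icc (0:ℝ) 1 → u ≤ v →
      (b - a) * ∫ t in u..v, (t - s) * f' (a + t * (b - a))
        = (v - s) * f (a + v * (b - a)) - (u - s) * f (a + u * (b - a))
          - ∫ t in u..v, f (a + t * (b - a)) := by
    intro s u v hu hv huv
    have huIcc : uIcc u v ⊆ Icc (0:ℝ) 1 := by
      rw [uIcc_of_le huv]
      exact Icc_subset_Icc hu.1 hv.2
    have hmem : ∀ t ∈ uIcc u v, a + t * (b - a) ∈ interior I := fun t ht =>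
      hIcc (haff_mem t (huIcc ht))
    have hF : ∀ t ∈ uIcc u v, HasDerivAt (fun t => (t - s) * f (a + t * (b - a)))
        (f (a + t * (b - a)) + (t - s) * ((b - a) * f' (a + t * (b - a)))) t := by
      intro t ht
      have h1 : HasDerivAt (fun t : ℝ => a + t * (b - a)) (b - a) t := by
        simpa using ((hasDerivAt_id t).mul_const (b - a)).const_add a
      have h2 : HasDerivAt (fun t => f (a + t * (b - a)))
          ((b - a) * f' (a + t * (b - a))) t := by
        have := (hdf _ (hmem t ht)).comp t h1
        rw [mul_comm]; exact this
      have h3 : HasDerivAt (fun t : ℝ => t - s) 1 t := (hasDerivAt_id t).sub_const s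
      have h4 := h3.mul h2; simp only [one_mul] at h4; exact h4
    have hint2 : IntervalIntegrable
        (fun t => (t - s) * ((b - a) * f' (a + t * (b - a)))) volume u v := by
      have := ((hgi u v hu.1 hv.2 huv).const_mul (b - a)).continuousOn_mul
        (by fun_prop : Continuous fun t : ℝ => t - s).continuousOn
      simpa [mul_assoc] using this
    have hFi : IntervalIntegrable
        (fun t => f (a + t * (b - a)) + (t - s) * ((b - a) * f' (a + t * (b - a))))
        volume u v := (hfc u v hu.1 hv.2 huv).add hint2
    have heq := intervalIntegral.integral_eq_sub_of_hasDerivAt hF hFi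
    rw [intervalIntegral.integral_add (hfc u v hu.1 hv.2 huv) hint2] at heq
    have hpull : ∫ t in u..v, (t - s) * ((b - a) * f' (a + t * (b - a)))
        = (b - a) * ∫ t in u..v, (t - s) * f' (a + t * (b - a)) := by
      rw [← intervalIntegral.integral_const_mul]
      apply intervalIntegral.integral_congr
      intro t _
      ring
    rw [hpull] at heq
    linarith [heq]
  -- bounds on ∫ |f'∘aff|^q over the two subintervals
  have hG1 : ∫ t in (0:ℝ)..(1-α), |f' (a + t * (b - a))| ^ q
      ≤ (1 - α) * (|f' ((1 - α) * b + α * a)| ^ q + |f' a| ^ q) := by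
    rcases eq_or_lt_of_le hc0 with h0 | h0
    · rw [← h0]
      simp
    · have hb1 : ∀ t ∈ Icc (0:ℝ) (1-α),
          |f' (a + t * (b - a))| ^ q ≤ |f' ((1 - α) * b + α * a)| ^ q + |f' a| ^ q := by
        intro t ht
        have hr : t / (1 - α) ∈ Icc (0:ℝ) 1 :=
          ⟨div_nonneg ht.1 hc0, (div_le_one h0).mpr ht.2⟩
        have := hP.2 _ hAmem a ⟨le_rfl, hab.le⟩ _ hr
        have harg : t / (1 - α) * ((1 - α) * b + α * a) + (1 - t / (1 - α)) * a
            = a + t * (b - a) := by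
          field_simp
          ring
        rwa [harg] at this
      calc ∫ t in (0:ℝ)..(1-α), |f' (a + t * (b - a))| ^ q
          ≤ ∫ _t in (0:ℝ)..(1-α), (|f' ((1 - α) * b + α * a)| ^ q + |f' a| ^ q) :=
            intervalIntegral.integral_mono_on hc0 (hgq_int 0 (1-α) le_rfl hc1 hc0)
              intervalIntegrable_const hb1
        _ = (1 - α) * (|f' ((1 - α) * b + α * a)| ^ q + |f' a| ^ q) := by
            rw [intervalIntegral.integral_const, smul_eq_mul, sub_zero]
  have hG2 : ∫ t in (1-α)..(1:ℝ), |f' (a + t * (b - a))| ^ q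
      ≤ α * (|f' ((1 - α) * b + α * a)| ^ q + |f' b| ^ q) := by
    rcases eq_or_lt_of_le hα.1 with h0 | h0
    · rw [← h0]
      simp
    · have hb1 : ∀ t ∈ Icc (1-α) (1:ℝ),
          |f' (a + t * (b - a))| ^ q ≤ |f' ((1 - α) * b + α * a)| ^ q + |f' b| ^ q := by
        intro t ht
        have hr : (1 - t) / α ∈ Icc (0:ℝ) 1 := by
          constructor
          · exact div_nonneg (by linarith [ht.2]) h0.le
          · rw [div_le_one h0]; linarith [ht.1]
        have := hP.2 _ hAmem b ⟨hab.le, le_rfl⟩ _ hr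
        have harg : (1 - t) / α * ((1 - α) * b + α * a) + (1 - (1 - t) / α) * b
            = a + t * (b - a) := by
          field_simp
          ring
        rwa [harg] at this
      calc ∫ t in (1-α)..(1:ℝ), |f' (a + t * (b - a))| ^ q
          ≤ ∫ _t in (1-α)..(1:ℝ), (|f' ((1 - α) * b + α * a)| ^ q + |f' b| ^ q) :=
            intervalIntegral.integral_mono_on hc1 (hgq_int (1-α) 1 hc0 le_rfl hc1)
              intervalIntegrable_const hb1
        _ = α * (|f' ((1 - α) * b + α * a)| ^ q + |f' b| ^ q) := by
            rw [intervalIntegral.integral_const, smul_eq_mul]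
            ring
  -- the identity for I_f
  have hiden : lam * (α * f a + (1 - α) * f b) + (1 - lam) * f (α * a + (1 - α) * b)
      - (1 / (b - a)) * ∫ x in a..b, f x
      = (b - a) * ((∫ t in (0:ℝ)..(1-α), (t - α * lam) * f' (a + t * (b - a)))
        + ∫ t in (1-α)..(1:ℝ), (t - (1 - lam * (1 - α))) * f' (a + t * (b - a))) := by
    have k1 := key (α * lam) 0 (1-α) ⟨le_rfl, zero_le_one⟩ ⟨hc0, hc1⟩ hc0
    have k2 := key (1 - lam * (1 - α)) (1-α) 1 ⟨hc0, hc1⟩ ⟨zero_le_one, le_rfl⟩ hc1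
    rw [show a + 0 * (b - a) = a by ring] at k1
    rw [show a + 1 * (b - a) = b by ring] at k2
    have hadj : (∫ t in (0:ℝ)..(1-α), f (a + t * (b - a)))
        + ∫ t in (1-α)..(1:ℝ), f (a + t * (b - a))
        = ∫ t in (0:ℝ)..(1:ℝ), f (a + t * (b - a)) :=
      intervalIntegral.integral_add_adjacent_intervals
        (hfc 0 (1-α) le_rfl hc1 hc0) (hfc (1-α) 1 hc0 le_rfl hc1)
    have htot : ∫ t in (0:ℝ)..(1:ℝ), f (a + t * (b - a))
        = (b - a)⁻¹ * ∫ x in a..b, f x := by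
      have h := intervalIntegral.integral_comp_mul_add (a := 0) (b := 1)
        (c := b - a) f (ne_of_gt hba) a
      rw [show (b - a) * 0 + a = a by ring, show (b - a) * 1 + a = b by ring,
        smul_eq_mul] at h
      rw [← h]
      apply intervalIntegral.integral_congr
      intro t _
      exact congrArg f (by ring)
    have hfA : f (α * a + (1 - α) * b) = f (a + (1 - α) * (b - a)) :=
      congrArg f (by ring)
    rw [hfA]
    have hsum2 : (∫ t in (0:ℝ)..(1-α), f (a + t * (b - a)))
        + ∫ t in (1-α)..(1:ℝ), f (a + t * (b - a))
        = (b - a)⁻¹ * ∫ x in a..b, f x := hadj.trans htot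
    linear_combination -k1 - k2 + hsum2
  -- the master bound
  have master : ∀ e₁ e₂ : ℝ,
      (∫ t in (0:ℝ)..(1-α), |t - α * lam| ^ p) = e₁ / (p+1) →
      (∫ t in (1-α)..(1:ℝ), |t - (1 - lam * (1 - α))| ^ p) = e₂ / (p+1) →
      |lam * (α * f a + (1 - α) * f b) + (1 - lam) * f (α * a + (1 - α) * b)
          - (1 / (b - a)) * ∫ x in a..b, f x|
        ≤ (b - a) * (1 / (p + 1)) ^ (1 / p)
            * (e₁ ^ (1/p) * ((1 - α) * (|f' ((1 - α) * b + α * a)| ^ q + |f' a| ^ q)) ^ (1/q)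
              + e₂ ^ (1/p) * (α * (|f' ((1 - α) * b + α * a)| ^ q + |f' b| ^ q)) ^ (1/q)) := by
    intro e₁ e₂ hK1 hK2
    have hKnn1 : 0 ≤ ∫ t in (0:ℝ)..(1-α), |t - α * lam| ^ p :=
      intervalIntegral.integral_nonneg hc0
        (fun t _ => Real.rpow_nonneg (abs_nonneg _) _)
    have hKnn2 : 0 ≤ ∫ t in (1-α)..(1:ℝ), |t - (1 - lam * (1 - α))| ^ p :=
      intervalIntegral.integral_nonneg hc1
        (fun t _ => Real.rpow_nonneg (abs_nonneg _) _)
    have he₁ : 0 ≤ e₁ := by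
      rw [hK1] at hKnn1
      have h2 := mul_nonneg hKnn1 (show (0:ℝ) ≤ p + 1 by linarith)
      rwa [div_mul_cancel₀ _ (show (p:ℝ) + 1 ≠ 0 by positivity)] at h2
    have he₂ : 0 ≤ e₂ := by
      rw [hK2] at hKnn2
      have h2 := mul_nonneg hKnn2 (show (0:ℝ) ≤ p + 1 by linarith)
      rwa [div_mul_cancel₀ _ (show (p:ℝ) + 1 ≠ 0 by positivity)] at h2
    have hGnn1 : 0 ≤ ∫ t in (0:ℝ)..(1-α), |f' (a + t * (b - a))| ^ q :=
      intervalIntegral.integral_nonneg hc0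
        (fun t _ => Real.rpow_nonneg (abs_nonneg _) _)
    have hGnn2 : 0 ≤ ∫ t in (1-α)..(1:ℝ), |f' (a + t * (b - a))| ^ q :=
      intervalIntegral.integral_nonneg hc1
        (fun t _ => Real.rpow_nonneg (abs_nonneg _) _)
    -- Memℒp for kernels
    have hker_mem : ∀ s u v : ℝ, MemLp (fun t => t - s) (ENNReal.ofReal p)
        (volume.restrict (Ioc u v)) := by
      intro s u v
      refine MemLp.of_bound ((continuous_id.sub continuous_const).aestronglyMeasurable)
        (|u - s| + |v - s|) ?_
      refine (ae_restrict_iff' measurableSet_Ioc).mpr (ae_of_all _ fun t ht => ?_)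
      rw [Real.norm_eq_abs]
      rw [abs_le]
      constructor
      · have := neg_abs_le (u - s); linarith [ht.1, abs_nonneg (v - s)]
      · have := le_abs_self (v - s); linarith [ht.2, abs_nonneg (u - s)]
    have hh1 := holder_interval hc0 hpq' (hker_mem (α * lam) 0 (1-α))
      (hg_mem 0 (1-α) le_rfl hc1)
    have hh2 := holder_interval hc1 hpq' (hker_mem (1 - lam * (1 - α)) (1-α) 1)
      (hg_mem (1-α) 1 hc0 le_rfl)
    have hcf : (0:ℝ) ≤ (1 - α) * (|f' ((1 - α) * b + α * a)| ^ q + |f' a| ^ q) := by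
      have := Real.rpow_nonneg (abs_nonneg (f' ((1 - α) * b + α * a))) q
      have := Real.rpow_nonneg (abs_nonneg (f' a)) q
      nlinarith
    have hkf : (0:ℝ) ≤ α * (|f' ((1 - α) * b + α * a)| ^ q + |f' b| ^ q) := by
      have := Real.rpow_nonneg (abs_nonneg (f' ((1 - α) * b + α * a))) q
      have := Real.rpow_nonneg (abs_nonneg (f' b)) q
      nlinarith [hα.1]
    have hJ1 : |∫ t in (0:ℝ)..(1-α), (t - α * lam) * f' (a + t * (b - a))|
        ≤ (1 / (p + 1)) ^ (1/p) * e₁ ^ (1/p)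
          * ((1 - α) * (|f' ((1 - α) * b + α * a)| ^ q + |f' a| ^ q)) ^ (1/q) := by
      refine le_trans hh1 ?_
      have h1 : (∫ t in (0:ℝ)..(1-α), |t - α * lam| ^ p) ^ (1/p)
          = (1 / (p + 1)) ^ (1/p) * e₁ ^ (1/p) := by
        rw [hK1, div_eq_mul_inv, mul_comm, ← Real.mul_rpow (by positivity) he₁,
          ← one_div]
      rw [h1, mul_assoc, mul_assoc]
      refine mul_le_mul_of_nonneg_left ?_ (Real.rpow_nonneg (by positivity : (0:ℝ) ≤ 1/(p+1)) (1/p))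
      refine mul_le_mul_of_nonneg_left ?_ (Real.rpow_nonneg he₁ _)
      exact Real.rpow_le_rpow hGnn1 hG1 (by positivity)
    have hJ2 : |∫ t in (1-α)..(1:ℝ), (t - (1 - lam * (1 - α))) * f' (a + t * (b - a))|
        ≤ (1 / (p + 1)) ^ (1/p) * e₂ ^ (1/p)
          * (α * (|f' ((1 - α) * b + α * a)| ^ q + |f' b| ^ q)) ^ (1/q) := by
      refine le_trans hh2 ?_
      have h1 : (∫ t in (1-α)..(1:ℝ), |t - (1 - lam * (1 - α))| ^ p) ^ (1/p)
          = (1 / (p + 1)) ^ (1/p) * e₂ ^ (1/p) := by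
        rw [hK2, div_eq_mul_inv, mul_comm, ← Real.mul_rpow (by positivity) he₂,
          ← one_div]
      rw [h1, mul_assoc, mul_assoc]
      refine mul_le_mul_of_nonneg_left ?_ (Real.rpow_nonneg (by positivity : (0:ℝ) ≤ 1/(p+1)) (1/p))
      refine mul_le_mul_of_nonneg_left ?_ (Real.rpow_nonneg he₂ _)
      exact Real.rpow_le_rpow hGnn2 hG2 (by positivity)
    rw [hiden]
    calc |(b - a) * ((∫ t in (0:ℝ)..(1-α), (t - α * lam) * f' (a + t * (b - a)))
          + ∫ t in (1-α)..(1:ℝ), (t - (1 - lam * (1 - α))) * f' (a + t * (b - a)))|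
        = (b - a) * |(∫ t in (0:ℝ)..(1-α), (t - α * lam) * f' (a + t * (b - a)))
          + ∫ t in (1-α)..(1:ℝ), (t - (1 - lam * (1 - α))) * f' (a + t * (b - a))| := by
          rw [abs_mul, abs_of_pos hba]
      _ ≤ (b - a) * (|∫ t in (0:ℝ)..(1-α), (t - α * lam) * f' (a + t * (b - a))|
          + |∫ t in (1-α)..(1:ℝ), (t - (1 - lam * (1 - α))) * f' (a + t * (b - a))|) :=
          mul_le_mul_of_nonneg_left (abs_add_le _ _) hba.le
      _ ≤ (b - a) * ((1 / (p + 1)) ^ (1/p) * e₁ ^ (1/p)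
            * ((1 - α) * (|f' ((1 - α) * b + α * a)| ^ q + |f' a| ^ q)) ^ (1/q)
          + (1 / (p + 1)) ^ (1/p) * e₂ ^ (1/p)
            * (α * (|f' ((1 - α) * b + α * a)| ^ q + |f' b| ^ q)) ^ (1/q)) :=
          mul_le_mul_of_nonneg_left (add_le_add hJ1 hJ2) hba.le
      _ = (b - a) * (1 / (p + 1)) ^ (1 / p)
            * (e₁ ^ (1/p) * ((1 - α) * (|f' ((1 - α) * b + α * a)| ^ q + |f' a| ^ q)) ^ (1/q)
              + e₂ ^ (1/p) * (α * (|f' ((1 - α) * b + α * a)| ^ q + |f' b| ^ q)) ^ (1/q)) := by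
          ring
  refine ⟨fun h => ?_, fun h => ?_, fun h => ?_⟩
  · obtain ⟨h1, h2⟩ := h
    have hK1 := ker_mid (α * lam) 0 (1-α) p hp0 hs₁0 h1
    rw [show α * lam - 0 = α * lam by ring,
      show 1 - α - α * lam = 1 - α - α * lam by ring] at hK1
    have hK2 := ker_mid (1 - lam * (1 - α)) (1-α) 1 p hp0 (by linarith) hs₂1
    rw [show 1 - lam * (1 - α) - (1 - α) = 1 - (1 - α) - (1 - α) * lam by ring,
      show 1 - (1 - lam * (1 - α)) = (1 - α) * lam by ring] at hK2
    exact master (eps1 α lam p) (eps1 (1 - α) lam p)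
      (by rw [hK1]; simp only [eps1]; try ring) (by rw [hK2]; simp only [eps1]; try ring)
  · obtain ⟨h1, h2⟩ := h
    have hK1 := ker_mid (α * lam) 0 (1-α) p hp0 hs₁0 (le_trans h1 h2)
    have hK2 := ker_right (1 - lam * (1 - α)) (1-α) 1 p hp0 h2 hc1
    rw [show α * lam - 0 = α * lam by ring] at hK1
    rw [show 1 - (1 - lam * (1 - α)) = (1 - α) * lam by ring,
      show 1 - α - (1 - lam * (1 - α)) = (1 - α) * lam - 1 + (1 - α) by ring] at hK2
    exact master (eps1 α lam p) (eps2 (1 - α) lam p)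
      (by rw [hK1]; simp only [eps1]; try ring) (by rw [hK2]; simp only [eps2]; try ring)
  · obtain ⟨h1, h2⟩ := h
    have hK1 := ker_left (α * lam) 0 (1-α) p hp0 h1 hc0
    rw [show α * lam - 0 = α * lam by ring,
      show α * lam - (1 - α) = α * lam - 1 + α by ring] at hK1
    have hK2 := ker_mid (1 - lam * (1 - α)) (1-α) 1 p hp0 (le_trans h1 h2) hs₂1
    rw [show 1 - lam * (1 - α) - (1 - α) = 1 - (1 - α) - (1 - α) * lam by ring,
      show 1 - (1 - lam * (1 - α)) = (1 - α) * lam by ring] at hK2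
    exact master (eps2 α lam p) (eps1 (1 - α) lam p)
      (by rw [hK1]; simp only [eps2]; try ring) (by rw [hK2]; simp only [eps1]; try ring)
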